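/- There exists a multi-valued function F from the unit interval [0,1] to [0,1] such that F(x) is nonempty for every x ∈ [0,1], the graph of F is a Borel subset of [0,1] × [0,1], and the set of points of continuity of F is an analytic subset of [0,1] which is not Borel. -/

import Mathlib

/-- A multi-valued function `F : X → Set Y` is continuous at `x`. -/
def MVContinuousAt {X Y : Type*} [MetricSpace X] [MetricSpace Y]
    (F : X → Set Y) (x : X) : Prop :=
  ∃ y ∈ F x, ∀ ε > (0 : ℝ), ∃ δ > (0 : ℝ),
    ∀ x', dist x' x < δ → ∃ y' ∈ F x', dist y y' < ε


open MeasureTheory Set Filter Topology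

noncomputable section MVAux

/-- reversed prefix of length `n` -/
def rp : ℕ → (ℕ → ℕ) → List ℕ
  | 0, _ => []
  | n+1, x => x n :: rp n x

lemma rp_length (n : ℕ) (x : ℕ → ℕ) : (rp n x).length = n := by
  induction n with
  | zero => rfl
  | succ n ih => simp [rp, ih]

lemma rp_eq_iff {n : ℕ} {x y : ℕ → ℕ} : rp n x = rp n y ↔ ∀ i < n, x i = y i := by
  induction n with
  | zero => simp [rp]
  | succ n ih =>
    simp only [rp, List.cons.injEq, ih]
    constructor
    · rintro ⟨h1, h2⟩ i hi
      rcases Nat.lt_succ_iff_lt_or_eq.1 hi with h | h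
      · exact h2 i h
      · subst h; exact h1
    · intro h
      exact ⟨h n (Nat.lt_succ_self n), fun i hi => h i (hi.trans (Nat.lt_succ_self n))⟩

/-- the universal analytic set over `ℕ → ℕ` -/
def USet (a y : ℕ → ℕ) : Prop :=
  ∃ x : ℕ → ℕ, ∀ n, a (Encodable.encode (rp n y, rp n x)) = 1

/-- the diagonal set: analytic, not Borel -/
def DD : Set (ℕ → ℕ) := {a | USet a a}

lemma isClosed_CC : IsClosed {p : (ℕ → ℕ) × (ℕ → ℕ) |
    ∀ n, p.1 (Encodable.encode (rp n p.1, rp n p.2)) = 1} := by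
  rw [← isOpen_compl_iff, isOpen_iff_mem_nhds]
  intro p hp
  simp only [mem_compl_iff, mem_setOf_eq, not_forall] at hp
  obtain ⟨n, hn⟩ := hp
  set k0 := Encodable.encode (rp n p.1, rp n p.2) with hk0
  have : ({q : (ℕ → ℕ) × (ℕ → ℕ) | rp n q.1 = rp n p.1} ∩ {q | rp n q.2 = rp n p.2} ∩
      {q | q.1 k0 = p.1 k0}) ∈ 𝓝 p := by
    have h1 : IsOpen {q : (ℕ → ℕ) × (ℕ → ℕ) | rp n q.1 = rp n p.1} := by
      have : {q : (ℕ → ℕ) × (ℕ → ℕ) | rp n q.1 = rp n p.1}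
          = ⋂ i ∈ Finset.range n, {q : (ℕ → ℕ) × (ℕ → ℕ) | q.1 i = p.1 i} := by
        ext q; simp [rp_eq_iff]
      rw [this]
      exact isOpen_biInter_finset fun i _ =>
        IsOpen.preimage (f := fun q : (ℕ → ℕ) × (ℕ → ℕ) => q.1 i) (by fun_prop)
          (isOpen_discrete {p.1 i})
    have h2 : IsOpen {q : (ℕ → ℕ) × (ℕ → ℕ) | rp n q.2 = rp n p.2} := by
      have : {q : (ℕ → ℕ) × (ℕ → ℕ) | rp n q.2 = rp n p.2}
          = ⋂ i ∈ Finset.range n, {q : (ℕ → ℕ) × (ℕ → ℕ) | q.2 i = p.2 i} := by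
        ext q; simp [rp_eq_iff]
      rw [this]
      exact isOpen_biInter_finset fun i _ =>
        IsOpen.preimage (f := fun q : (ℕ → ℕ) × (ℕ → ℕ) => q.2 i) (by fun_prop)
          (isOpen_discrete {p.2 i})
    have h3 : IsOpen {q : (ℕ → ℕ) × (ℕ → ℕ) | q.1 k0 = p.1 k0} :=
      IsOpen.preimage (f := fun q : (ℕ → ℕ) × (ℕ → ℕ) => q.1 k0) (by fun_prop)
        (isOpen_discrete {p.1 k0})
    exact ((h1.inter h2).inter h3).mem_nhds ⟨⟨rfl, rfl⟩, rfl⟩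
  filter_upwards [this] with q hq
  simp only [mem_compl_iff, mem_setOf_eq, not_forall]
  refine ⟨n, ?_⟩
  obtain ⟨⟨hq1, hq2⟩, hq3⟩ := hq
  rw [hq1, hq2, hq3]
  exact hn

lemma analyticSet_DD : AnalyticSet DD := by
  have : DD = Prod.fst '' {p : (ℕ → ℕ) × (ℕ → ℕ) |
      ∀ n, p.1 (Encodable.encode (rp n p.1, rp n p.2)) = 1} := by
    ext a
    simp only [DD, USet, mem_setOf_eq, mem_image, Prod.exists]
    constructor
    · rintro ⟨x, hx⟩; exact ⟨a, x, hx, rfl⟩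
    · rintro ⟨b, x, hx, rfl⟩; exact ⟨x, hx⟩
  rw [this]
  haveI : PolishSpace ((ℕ → ℕ) × (ℕ → ℕ)) := inferInstance
  exact (isClosed_CC.measurableSet.analyticSet).image_of_continuous continuous_fst

lemma usetUniversal (φ : (ℕ → ℕ) → (ℕ → ℕ)) (hφ : Continuous φ) :
    ∃ a, ∀ y, USet a y ↔ y ∈ range φ := by
  classical
  set P : List ℕ × List ℕ → Prop := fun st =>
    ∃ x : ℕ → ℕ, rp st.1.length x = st.2 ∧ rp st.1.length (φ x) = st.1 with hP
  refine ⟨fun k => if (Encodable.decode (α := List ℕ × List ℕ) k).elim False P then 1 else 0,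
    fun y => ?_⟩
  constructor
  · rintro ⟨x, hx⟩
    -- for each n there is x_n agreeing with x up to n with φ x_n agreeing with y up to n
    have key : ∀ n, ∃ xn : ℕ → ℕ, rp n xn = rp n x ∧ rp n (φ xn) = rp n y := by
      intro n
      have h := hx n
      simp only [Encodable.encodek, Option.elim] at h
      split_ifs at h with hcond
      · obtain ⟨xn, h1, h2⟩ := hcond
        rw [rp_length] at h1 h2
        exact ⟨xn, h1, h2⟩
    choose xn h1 h2 using key
    -- xn → x, so φ xn → φ x; also φ xn i = y i eventually, so φ x = y
    have hxn : Tendsto xn atTop (𝓝 x) := by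
      rw [tendsto_pi_nhds]
      intro i
      refine Tendsto.congr' ?_ tendsto_const_nhds
      filter_upwards [eventually_ge_atTop (i+1)] with n hn
      exact ((rp_eq_iff.1 (h1 n)) i (by omega)).symm
    have hφxn : Tendsto (fun n => φ (xn n)) atTop (𝓝 (φ x)) :=
      (hφ.tendsto x).comp hxn
    have hφxy : Tendsto (fun n => φ (xn n)) atTop (𝓝 y) := by
      rw [tendsto_pi_nhds]
      intro i
      refine Tendsto.congr' ?_ tendsto_const_nhds
      filter_upwards [eventually_ge_atTop (i+1)] with n hn
      exact ((rp_eq_iff.1 (h2 n)) i (by omega)).symm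
    exact ⟨x, tendsto_nhds_unique hφxn hφxy⟩
  · rintro ⟨x, rfl⟩
    refine ⟨x, fun n => ?_⟩
    have : P (rp n (φ x), rp n x) := ⟨x, by rw [rp_length], by rw [rp_length]⟩
    simp only [Encodable.encodek, Option.elim, if_pos this]

lemma not_measurableSet_DD : ¬ MeasurableSet DD := by
  intro hD
  have hDc : AnalyticSet DDᶜ := hD.compl.analyticSet
  rw [AnalyticSet] at hDc
  rcases hDc with h | ⟨φ, hφ, hrange⟩
  · -- DDᶜ = ∅ : but the constant 0 function is not in DD
    have : (fun _ => 0 : ℕ → ℕ) ∈ DD := by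
      have : (fun _ => 0 : ℕ → ℕ) ∈ (DDᶜ)ᶜ := by rw [h]; simp
      simpa using this
    obtain ⟨x, hx⟩ := this
    simpa using hx 0
  · obtain ⟨a, ha⟩ := usetUniversal φ hφ
    have h1 : a ∈ DD ↔ a ∈ DDᶜ := by
      rw [← hrange]
      exact ha a
    simp at h1




/-- exponent sequence: strictly increasing, `SS x k ≥ k+1` -/
def SS (x : ℕ → ℕ) (k : ℕ) : ℕ := (∑ j ∈ Finset.range (k+1), x j) + k + 1

lemma SS_strictMono (x : ℕ → ℕ) : StrictMono (SS x) := by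
  apply strictMono_nat_of_lt_succ
  intro k
  have : (∑ j ∈ Finset.range (k+1), x j) ≤ ∑ j ∈ Finset.range (k+1+1), x j :=
    Finset.sum_le_sum_of_subset (Finset.range_subset_range.2 (by omega))
  simp only [SS]; omega

lemma SS_ge (x : ℕ → ℕ) (k : ℕ) : k + 1 ≤ SS x k := by
  simp only [SS]; omega

lemma SS_add_le (x : ℕ → ℕ) (k j : ℕ) : SS x k + j ≤ SS x (k + j) := by
  induction j with
  | zero => simp
  | succ j ih =>
    have := SS_strictMono x (show k + j < k + (j+1) by omega)
    omega

lemma summable_SS (x : ℕ → ℕ) : Summable fun k => (1/2 : ℝ) ^ (SS x k) := by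
  apply Summable.of_nonneg_of_le (fun k => by positivity)
    (fun k => ?_) (summable_geometric_two.mul_left ((1/2 : ℝ)))
  calc (1/2:ℝ) ^ SS x k ≤ (1/2:ℝ) ^ (k+1) := by
        apply pow_le_pow_of_le_one (by norm_num) (by norm_num) (SS_ge x k)
    _ = 1/2 * (1/2)^k := by ring

def gg (x : ℕ → ℕ) : ℝ := ∑' k, (1/2 : ℝ) ^ (SS x k)

lemma gg_nonneg (x : ℕ → ℕ) : 0 ≤ gg x :=
  tsum_nonneg fun k => by positivity

lemma gg_le_one (x : ℕ → ℕ) : gg x ≤ 1 := by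
  have h := Summable.tsum_le_tsum (f := fun k => (1/2:ℝ)^(SS x k)) (g := fun k => 1/2 * (1/2)^k)
    (fun k => by
      calc (1/2:ℝ) ^ SS x k ≤ (1/2:ℝ) ^ (k+1) := by
            apply pow_le_pow_of_le_one (by norm_num) (by norm_num) (SS_ge x k)
        _ = 1/2 * (1/2)^k := by ring)
    (summable_SS x) (summable_geometric_two.mul_left _)
  calc gg x ≤ ∑' k, 1/2 * (1/2:ℝ)^k := h
    _ = 1/2 * ∑' k, (1/2:ℝ)^k := tsum_mul_left
    _ = 1 := by rw [tsum_geometric_two]; norm_num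

lemma gg_mem (x : ℕ → ℕ) : gg x ∈ Set.Icc (0:ℝ) 1 := ⟨gg_nonneg x, gg_le_one x⟩

lemma continuous_gg : Continuous gg := by
  apply continuous_tsum (f := fun k (x : ℕ → ℕ) => (1/2:ℝ)^(SS x k))
    (u := fun k => (1/2:ℝ)^(k+1))
  · intro k
    -- SS · k depends on finitely many coordinates, hence locally constant
    have hc : Continuous fun x : ℕ → ℕ => SS x k := by
      have : (fun x : ℕ → ℕ => SS x k) =
          (fun v : Fin (k+1) → ℕ => (∑ j ∈ Finset.range (k+1), if h : j < k+1 then v ⟨j, h⟩ else 0) + k + 1)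
            ∘ (fun x (i : Fin (k+1)) => x i) := by
        funext x
        simp only [Function.comp_apply, SS]
        congr 1
        · congr 1
          apply Finset.sum_congr rfl
          intro j hj
          rw [dif_pos (Finset.mem_range.1 hj)]
      rw [this]
      exact (continuous_of_discreteTopology).comp (by fun_prop)
    exact (continuous_of_discreteTopology (α := ℕ) (f := fun n => (1/2:ℝ)^n)).comp hc
  · exact summable_geometric_two.mul_left ((1/2:ℝ)) |>.congr (fun k => by ring)
  · intro k x
    rw [Real.norm_eq_abs, abs_of_nonneg (by positivity)]
    apply pow_le_pow_of_le_one (by norm_num) (by norm_num) (SS_ge x k)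

lemma gg_lt_of_SS_lt {x y : ℕ → ℕ} {k : ℕ} (hagree : ∀ j < k, SS x j = SS y j)
    (hlt : SS x k < SS y k) : gg y < gg x := by
  have hsx := summable_SS x
  have hsy := summable_SS y
  have hx : gg x = (∑ j ∈ Finset.range k, (1/2:ℝ)^(SS x j)) + ∑' j, (1/2:ℝ)^(SS x (j + k)) :=
    (Summable.sum_add_tsum_nat_add k (summable_SS x)).symm
  have hy : gg y = (∑ j ∈ Finset.range k, (1/2:ℝ)^(SS y j)) + ∑' j, (1/2:ℝ)^(SS y (j + k)) :=
    (Summable.sum_add_tsum_nat_add k (summable_SS y)).symm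
  have hhead : (∑ j ∈ Finset.range k, (1/2:ℝ)^(SS x j)) = ∑ j ∈ Finset.range k, (1/2:ℝ)^(SS y j) :=
    Finset.sum_congr rfl fun j hj => by rw [hagree j (Finset.mem_range.1 hj)]
  -- tail of y is at most (1/2)^(SS x k)
  have htaily : (∑' j, (1/2:ℝ)^(SS y (j + k))) ≤ (1/2:ℝ)^(SS x k) := by
    have h1 : ∀ j, (1/2:ℝ)^(SS y (j + k)) ≤ (1/2)^(SS y k) * (1/2)^j := by
      intro j
      rw [← pow_add]
      apply pow_le_pow_of_le_one (by norm_num) (by norm_num)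
      have := SS_add_le y k j
      rw [Nat.add_comm k j] at this
      omega
    calc (∑' j, (1/2:ℝ)^(SS y (j + k))) ≤ ∑' j, (1/2:ℝ)^(SS y k) * (1/2)^j :=
          Summable.tsum_le_tsum h1 ((summable_SS y).comp_injective (add_left_injective k))
            (summable_geometric_two.mul_left _)
      _ = (1/2:ℝ)^(SS y k) * 2 := by rw [tsum_mul_left, tsum_geometric_two]
      _ ≤ (1/2:ℝ)^(SS x k + 1) * 2 := by
          apply mul_le_mul_of_nonneg_right _ (by norm_num)
          apply pow_le_pow_of_le_one (by norm_num) (by norm_num) hlt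
      _ = (1/2:ℝ)^(SS x k) := by ring
  -- tail of x is strictly bigger
  have htailx : (1/2:ℝ)^(SS x k) < ∑' j, (1/2:ℝ)^(SS x (j + k)) := by
    have h2 : (∑ j ∈ Finset.range 2, (1/2:ℝ)^(SS x (j + k))) ≤ ∑' j, (1/2:ℝ)^(SS x (j + k)) :=
      Summable.sum_le_tsum (f := fun j => (1/2:ℝ)^(SS x (j + k))) (Finset.range 2)
        (fun j _ => by positivity)
        ((summable_SS x).comp_injective (add_left_injective k))
    have : (∑ j ∈ Finset.range 2, (1/2:ℝ)^(SS x (j + k)))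
        = (1/2:ℝ)^(SS x k) + (1/2:ℝ)^(SS x (1 + k)) := by
      rw [Finset.sum_range_succ, Finset.sum_range_one]
      norm_num
    nlinarith [pow_pos (by norm_num : (0:ℝ) < 1/2) (SS x (1 + k))]
  rw [hx, hy, hhead]
  have := htaily.trans_lt htailx
  linarith

lemma gg_inj : Function.Injective gg := by
  intro x y hxy
  by_contra hne
  -- x ≠ y gives SS x ≠ SS y; take the least point of difference
  have hSS : ∃ k, SS x k ≠ SS y k := by
    by_contra hall
    push_neg at hall
    apply hne
    funext i
    induction i with
    | zero =>
      have := hall 0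
      simp only [SS, zero_add, Finset.sum_range_one] at this
      omega
    | succ i ih =>
      have h1 := hall (i+1)
      have h2 := hall i
      simp only [SS, Finset.sum_range_succ] at h1 h2
      -- we need ∑_{j ≤ i} x j = ∑_{j ≤ i} y j from h2 and then conclude
      omega
  classical
  have hk : SS x (Nat.find hSS) ≠ SS y (Nat.find hSS) := Nat.find_spec hSS
  have hmin : ∀ j < Nat.find hSS, SS x j = SS y j := fun j hj => by
    have := Nat.find_min hSS hj
    tauto
  rcases lt_or_gt_of_ne hk with h | h
  · exact absurd hxy.symm (gg_lt_of_SS_lt hmin h).ne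
  · exact absurd hxy (gg_lt_of_SS_lt (fun j hj => (hmin j hj).symm) h).ne




def wI (i : ℕ) : ℝ := (1/10) * (1/2)^(i+1)
def tI (i : ℕ) : ℝ := 3/10 + (2/5) * (1/2)^(i+1)

def lenK : List ℕ → ℝ
  | [] => 1/2
  | i :: s => lenK s * wI i

def baseK : List ℕ → ℝ
  | [] => 1/2
  | i :: s => baseK s + lenK s * tI i

def KK (s : List ℕ) : Set ℝ := Icc (baseK s) (baseK s + lenK s)
def topK (s : List ℕ) : ℝ := baseK s + (9/10) * lenK s
def botK (s : List ℕ) : ℝ := baseK s + (1/10) * lenK s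
def midK (s : List ℕ) : Set ℝ := Icc (baseK s + (3/10) * lenK s) (baseK s + (11/20) * lenK s)

lemma wI_pos (i : ℕ) : 0 < wI i := by
  unfold wI; positivity

lemma wI_le (i : ℕ) : wI i ≤ 1/20 := by
  unfold wI
  have : (1/2:ℝ)^(i+1) ≤ (1/2)^1 := pow_le_pow_of_le_one (by norm_num) (by norm_num) (by omega)
  nlinarith

lemma tI_ge (i : ℕ) : 3/10 ≤ tI i := by
  unfold tI
  have : (0:ℝ) < (1/2)^(i+1) := by positivity
  nlinarith

lemma tI_add_wI_le (i : ℕ) : tI i + wI i ≤ 11/20 := by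
  unfold tI wI
  have : (1/2:ℝ)^(i+1) ≤ (1/2)^1 := pow_le_pow_of_le_one (by norm_num) (by norm_num) (by omega)
  nlinarith

lemma lenK_pos (s : List ℕ) : 0 < lenK s := by
  induction s with
  | nil => norm_num [lenK]
  | cons i s ih => simpa [lenK] using mul_pos ih (wI_pos i)

lemma lenK_le_half (s : List ℕ) : lenK s ≤ 1/2 := by
  induction s with
  | nil => norm_num [lenK]
  | cons i s ih =>
    have h1 := wI_le i
    have h2 := wI_pos i
    have h3 := lenK_pos s
    calc lenK (i :: s) = lenK s * wI i := rfl
      _ ≤ lenK s * (1/20) := by nlinarith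
      _ ≤ 1/2 := by nlinarith

lemma lenK_le_pow (s : List ℕ) : lenK s ≤ (1/2)^(s.length + 1) := by
  induction s with
  | nil => norm_num [lenK]
  | cons i s ih =>
    have h1 := wI_le i
    have h3 := lenK_pos s
    have h4 : (0:ℝ) < (1/2)^(s.length + 1) := by positivity
    calc lenK (i :: s) = lenK s * wI i := rfl
      _ ≤ (1/2)^(s.length+1) * (1/20) := by nlinarith
      _ ≤ (1/2)^(s.length+1) * (1/2) := by nlinarith
      _ = (1/2)^(s.length+1+1) := by ring
      _ = (1/2)^((i :: s).length + 1) := by simp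

lemma child_subset_mid (i : ℕ) (s : List ℕ) : KK (i :: s) ⊆ midK s := by
  have hl := lenK_pos s
  have h1 := tI_ge i
  have h2 := tI_add_wI_le i
  have h3 := wI_pos i
  intro y hy
  simp only [KK, midK, mem_Icc] at hy ⊢
  have hb : baseK (i :: s) = baseK s + lenK s * tI i := rfl
  have hlen : lenK (i :: s) = lenK s * wI i := rfl
  constructor
  · nlinarith [hy.1]
  · nlinarith [hy.2]

lemma midK_subset (s : List ℕ) : midK s ⊆ KK s := by
  have hl := lenK_pos s
  intro y hy
  simp only [KK, midK, mem_Icc] at hy ⊢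
  constructor <;> nlinarith [hy.1, hy.2]

lemma KK_child_subset (i : ℕ) (s : List ℕ) : KK (i :: s) ⊆ KK s :=
  (child_subset_mid i s).trans (midK_subset s)

lemma KK_suffix_subset {s t : List ℕ} (h : s <:+ t) : KK t ⊆ KK s := by
  obtain ⟨u, rfl⟩ := h
  induction u with
  | nil => simp
  | cons i u ih => exact (KK_child_subset i (u ++ s)).trans ih

lemma lenK_suffix_le {s t : List ℕ} (h : s <:+ t) : lenK t ≤ lenK s := by
  obtain ⟨u, rfl⟩ := h
  induction u with
  | nil => simp
  | cons i u ih =>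
    have h1 := wI_le i
    have h2 := lenK_pos (u ++ s)
    calc lenK (i :: (u ++ s)) = lenK (u ++ s) * wI i := rfl
      _ ≤ lenK (u ++ s) * (1/20) := by nlinarith
      _ ≤ lenK (u ++ s) := by nlinarith
      _ ≤ lenK s := ih

lemma KK_subset_unit (s : List ℕ) : KK s ⊆ Icc (1/2 : ℝ) 1 := by
  have h := KK_suffix_subset (List.nil_suffix (l := s))
  have : KK [] = Icc (1/2 : ℝ) 1 := by
    simp only [KK]
    norm_num [baseK, lenK]
  rwa [this] at h

lemma KK_sibling_disj {i j : ℕ} (hij : i ≠ j) (s : List ℕ) :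
    KK (i :: s) ∩ KK (j :: s) = ∅ := by
  have key : ∀ i j : ℕ, i < j → KK (i :: s) ∩ KK (j :: s) = ∅ := by
    intro i j hij
    have hl := lenK_pos s
    -- end of child j < start of child i
    have hend : baseK (j :: s) + lenK (j :: s) < baseK (i :: s) := by
      have hb1 : baseK (j :: s) = baseK s + lenK s * tI j := rfl
      have hb2 : baseK (i :: s) = baseK s + lenK s * tI i := rfl
      have hlen : lenK (j :: s) = lenK s * wI j := rfl
      have hp : (1/2:ℝ)^(j+1) ≤ (1/2)^(i+2) :=
        pow_le_pow_of_le_one (by norm_num) (by norm_num) (by omega)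
      have hq : (0:ℝ) < (1/2)^(i+1) := by positivity
      have hr : (1/2:ℝ)^(i+2) = (1/2) * (1/2)^(i+1) := by ring
      simp only [hb1, hb2, hlen, tI, wI]
      nlinarith
    ext y
    simp only [KK, mem_inter_iff, mem_Icc, mem_empty_iff_false, iff_false, not_and]
    intro h1 h2 h3
    nlinarith [h1, h2, h3]
  rcases lt_or_gt_of_ne hij with h | h
  · exact key i j h
  · rw [inter_comm]; exact key j i h

lemma KK_samelen_disj : ∀ {s t : List ℕ}, s.length = t.length → s ≠ t → KK s ∩ KK t = ∅ := by
  intro s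
  induction s with
  | nil =>
    intro t hlen hne
    exact absurd (List.length_eq_zero_iff.1 hlen.symm).symm hne
  | cons i s ih =>
    intro t hlen hne
    match t with
    | [] => simp at hlen
    | j :: t' =>
      simp only [List.length_cons, Nat.succ_inj] at hlen
      by_cases hst : s = t'
      · subst hst
        have hij : i ≠ j := by rintro rfl; exact hne rfl
        exact KK_sibling_disj hij s
      · have hdisj := ih hlen hst
        apply eq_empty_of_subset_empty
        calc KK (i :: s) ∩ KK (j :: t') ⊆ KK s ∩ KK t' :=
              inter_subset_inter (KK_child_subset i s) (KK_child_subset j t')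
          _ = ∅ := hdisj

lemma KK_suffix_of_inter : ∀ {t s : List ℕ}, s.length ≤ t.length →
    (KK s ∩ KK t).Nonempty → s <:+ t := by
  intro t
  induction t with
  | nil =>
    intro s hlen _
    simp only [List.length_nil, Nat.le_zero, List.length_eq_zero_iff] at hlen
    subst hlen; exact List.nil_suffix
  | cons j t' ih =>
    intro s hlen hne
    by_cases heq : s.length = (j :: t').length
    · by_cases hst : s = j :: t'
      · subst hst; exact List.suffix_rfl
      · rw [KK_samelen_disj heq hst] at hne
        simp at hne
    · have hlt : s.length ≤ t'.length := by
        simp only [List.length_cons] at hlen heq; omega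
      have : (KK s ∩ KK t').Nonempty :=
        hne.mono (inter_subset_inter subset_rfl (KK_child_subset j t'))
      exact ((ih hlt this).trans (List.suffix_cons j t'))

lemma topK_mem (s : List ℕ) : topK s ∈ KK s := by
  have := lenK_pos s
  simp only [topK, KK, mem_Icc]
  constructor <;> nlinarith

lemma botK_mem (s : List ℕ) : botK s ∈ KK s := by
  have := lenK_pos s
  simp only [botK, KK, mem_Icc]
  constructor <;> nlinarith

lemma far_of_not_mem {s : List ℕ} {y : ℝ} (hy : y ∉ KK s) :
    lenK s / 10 ≤ |y - topK s| ∧ lenK s / 10 ≤ |y - botK s| := by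
  have hl := lenK_pos s
  simp only [KK, mem_Icc, not_and_or, not_le] at hy
  rcases hy with h | h
  · constructor <;> (rw [abs_sub_comm, abs_of_pos (by simp only [topK, botK]; nlinarith)]
      <;> simp only [topK, botK]) <;> nlinarith
  · constructor <;> (rw [abs_of_pos (by simp only [topK, botK]; nlinarith)]
      <;> simp only [topK, botK]) <;> nlinarith

lemma far_of_mem_mid {s : List ℕ} {y : ℝ} (hy : y ∈ midK s) :
    lenK s / 10 ≤ |y - topK s| ∧ lenK s / 10 ≤ |y - botK s| := by
  have hl := lenK_pos s
  simp only [midK, mem_Icc] at hy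
  constructor
  · rw [abs_sub_comm, abs_of_pos (by simp only [topK]; nlinarith)]
    simp only [topK]; nlinarith
  · rw [abs_of_pos (by simp only [botK]; nlinarith)]
    simp only [botK]; nlinarith

lemma far_top_bot (s : List ℕ) : lenK s / 10 ≤ |topK s - botK s| := by
  have hl := lenK_pos s
  rw [abs_of_pos (by simp only [topK, botK]; nlinarith)]
  simp only [topK, botK]; nlinarith

/-- trichotomy for two nodes -/
lemma KK_cases (s t : List ℕ) :
    KK s ∩ KK t = ∅ ∨ t = s ∨ KK t ⊆ midK s ∨ (KK s ⊆ midK t ∧ lenK s ≤ lenK t) := by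
  by_cases hdisj : KK s ∩ KK t = ∅
  · exact Or.inl hdisj
  have hne : (KK s ∩ KK t).Nonempty := nonempty_iff_ne_empty.2 hdisj
  rcases le_total s.length t.length with hlen | hlen
  · have hsuf : s <:+ t := KK_suffix_of_inter hlen hne
    by_cases hst : t = s
    · exact Or.inr (Or.inl hst)
    · obtain ⟨u, rfl⟩ := hsuf
      have hu : u ≠ [] := by rintro rfl; exact hst (by simp)
      obtain ⟨u', i, rfl⟩ := List.eq_nil_or_concat u |>.resolve_left hu
      refine Or.inr (Or.inr (Or.inl ?_))
      have heq : u'.concat i ++ s = u' ++ (i :: s) := by simp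
      rw [heq]
      exact (KK_suffix_subset ⟨u', rfl⟩).trans (child_subset_mid i s)
  · have hsuf : t <:+ s := KK_suffix_of_inter hlen (by rwa [inter_comm] at hne)
    by_cases hst : t = s
    · exact Or.inr (Or.inl hst)
    · obtain ⟨u, rfl⟩ := hsuf
      have hu : u ≠ [] := by rintro rfl; exact hst (by simp)
      obtain ⟨u', i, rfl⟩ := List.eq_nil_or_concat u |>.resolve_left hu
      refine Or.inr (Or.inr (Or.inr ⟨?_, lenK_suffix_le ⟨u'.concat i, rfl⟩⟩))
      have heq : u'.concat i ++ t = u' ++ (i :: t) := by simp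
      rw [heq]
      exact (KK_suffix_subset ⟨u', rfl⟩).trans (child_subset_mid i t)

/-- distance from `botK t` to `topK s` is at least `lenK s / 10` -/
lemma far_bot_top (s t : List ℕ) : lenK s / 10 ≤ |botK t - topK s| := by
  rcases KK_cases s t with h | h | h | ⟨h, hlen⟩
  · apply (far_of_not_mem (s := s) (y := botK t) ?_).1
    intro hmem
    have : botK t ∈ KK s ∩ KK t := ⟨hmem, botK_mem t⟩
    rw [h] at this; exact this
  · rw [h, abs_sub_comm]; exact far_top_bot s
  · exact (far_of_mem_mid (h (botK_mem t))).1
  · have := (far_of_mem_mid (h (topK_mem s))).2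
    rw [abs_sub_comm] at this
    calc lenK s / 10 ≤ lenK t / 10 := by linarith
      _ ≤ |botK t - topK s| := this

/-- distance from `topK t` to `botK s` is at least `lenK s / 10` -/
lemma far_top_bot' (s t : List ℕ) : lenK s / 10 ≤ |topK t - botK s| := by
  rcases KK_cases s t with h | h | h | ⟨h, hlen⟩
  · apply (far_of_not_mem (s := s) (y := topK t) ?_).2
    intro hmem
    have : topK t ∈ KK s ∩ KK t := ⟨hmem, topK_mem t⟩
    rw [h] at this; exact this
  · rw [h]; exact far_top_bot s
  · exact (far_of_mem_mid (h (topK_mem t))).2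
  · have := (far_of_mem_mid (h (botK_mem s))).1
    rw [abs_sub_comm] at this
    calc lenK s / 10 ≤ lenK t / 10 := by linarith
      _ ≤ |topK t - botK s| := this

/-- a "depth-spanning" point is far from `topK s` and `botK s` -/
lemma far_deep {s : List ℕ} {y : ℝ}
    (hy : ∀ n, ∃ t : List ℕ, t.length = n ∧ y ∈ KK t) :
    lenK s / 10 ≤ |y - topK s| ∧ lenK s / 10 ≤ |y - botK s| := by
  obtain ⟨t0, ht0len, ht0⟩ := hy s.length
  by_cases h0 : t0 = s
  · subst h0
    obtain ⟨t1, ht1len, ht1⟩ := hy (t0.length + 1)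
    have hsuf : t0 <:+ t1 :=
      KK_suffix_of_inter (by omega) ⟨y, ht0, ht1⟩
    obtain ⟨u, rfl⟩ := hsuf
    have hu : u.length = 1 := by
      rw [List.length_append] at ht1len; omega
    obtain ⟨i, rfl⟩ := List.length_eq_one_iff.1 hu
    exact far_of_mem_mid (child_subset_mid i t0 ht1)
  · apply far_of_not_mem
    intro hmem
    have := KK_samelen_disj (ht0len.trans rfl : t0.length = s.length) h0
    rw [inter_comm] at this
    have : y ∈ KK s ∩ KK t0 := ⟨hmem, ht0⟩
    simp_all



/-! ### Part D: the analytic non-Borel subset of the unit interval -/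

lemma exists_ffDD : ∃ ffun : (ℕ → ℕ) → (ℕ → ℕ), Continuous ffun ∧ range ffun = DD := by
  have h := analyticSet_DD
  rw [AnalyticSet] at h
  rcases h with h | h
  · exfalso
    have : (fun _ => 1 : ℕ → ℕ) ∈ DD := ⟨fun _ => 1, fun n => rfl⟩
    rw [h] at this
    exact this
  · exact h

def ffDD : (ℕ → ℕ) → (ℕ → ℕ) := exists_ffDD.choose

lemma ffDD_cont : Continuous ffDD := exists_ffDD.choose_spec.1
lemma ffDD_range : range ffDD = DD := exists_ffDD.choose_spec.2

def gI : (ℕ → ℕ) → (Set.Icc (0:ℝ) 1) := fun x => ⟨gg x, gg_mem x⟩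

lemma gI_cont : Continuous gI := continuous_gg.subtype_mk _
lemma gI_inj : Function.Injective gI := fun x y h => gg_inj (congrArg Subtype.val h)

def fA : (ℕ → ℕ) → (Set.Icc (0:ℝ) 1) := fun x => gI (ffDD x)

lemma fA_cont : Continuous fA := gI_cont.comp ffDD_cont

def AA2 : Set (Set.Icc (0:ℝ) 1) := range fA

lemma analyticSet_AA2 : MeasureTheory.AnalyticSet AA2 :=
  MeasureTheory.analyticSet_range_of_polishSpace fA_cont

lemma not_measurableSet_AA2 : ¬ MeasurableSet AA2 := by
  intro hA
  apply not_measurableSet_DD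
  have hpre : gI ⁻¹' AA2 = DD := by
    ext x
    simp only [AA2, fA, mem_preimage, mem_range]
    constructor
    · rintro ⟨z, hz⟩
      have : ffDD z = x := gI_inj hz
      rw [← this, ← ffDD_range]
      exact mem_range_self z
    · intro hx
      rw [← ffDD_range] at hx
      obtain ⟨z, hz⟩ := hx
      exact ⟨z, by rw [hz]⟩
  rw [← hpre]
  exact hA.preimage gI_cont.measurable

/-! ### cylinders, closed approximations, thickenings -/

def cylin (s : List ℕ) : Set (ℕ → ℕ) := {x | rp s.length x = s}

lemma suffix_eq_of_length {l₁ l₂ l₃ : List ℕ} (h1 : l₁ <:+ l₃) (h2 : l₂ <:+ l₃)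
    (h : l₁.length = l₂.length) : l₁ = l₂ := by
  obtain ⟨t1, rfl⟩ := h1
  obtain ⟨t2, ht2⟩ := h2
  have hlen : t1.length = t2.length := by
    have := congrArg List.length ht2
    simp only [List.length_append] at this
    omega
  have d1 : (t1 ++ l₁).drop t1.length = l₁ := List.drop_left
  have d2 : (t2 ++ l₂).drop t2.length = l₂ := List.drop_left
  rw [← d1, ← d2, ← ht2, hlen]

lemma rp_suffix {k m : ℕ} (h : k ≤ m) (z : ℕ → ℕ) : rp k z <:+ rp m z := by
  induction m with
  | zero =>
    have : k = 0 := by omega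
    subst this; exact List.suffix_rfl
  | succ m ih =>
    rcases Nat.lt_succ_iff_lt_or_eq.1 (Nat.lt_succ_of_le h) with h' | h'
    · exact (ih (by omega)).trans (List.suffix_cons (z m) (rp m z))
    · subst h'; exact List.suffix_rfl

lemma cylin_antitone {s t : List ℕ} (h : s <:+ t) : cylin t ⊆ cylin s := by
  intro z hz
  simp only [cylin, mem_setOf_eq] at hz ⊢
  have hlen : s.length ≤ t.length := h.length_le
  have h1 : rp s.length z <:+ t := by rw [← hz]; exact rp_suffix hlen z
  exact suffix_eq_of_length h1 h (by rw [rp_length])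

def DcK (s : List ℕ) : Set (Set.Icc (0:ℝ) 1) := closure (fA '' cylin s)

def VK (s : List ℕ) : Set (Set.Icc (0:ℝ) 1) :=
  ⋃ d ∈ DcK s, Metric.ball d ((1/2)^s.length)

lemma isOpen_VK (s : List ℕ) : IsOpen (VK s) :=
  isOpen_biUnion fun _ _ => Metric.isOpen_ball

lemma mem_VK_self (α : ℕ → ℕ) (n : ℕ) : fA α ∈ VK (rp n α) := by
  have hmem : fA α ∈ DcK (rp n α) := by
    apply subset_closure
    exact ⟨α, by simp [cylin, rp_length], rfl⟩
  simp only [VK, mem_iUnion]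
  exact ⟨fA α, hmem, Metric.mem_ball_self (by positivity)⟩

lemma VK_limit {x : Set.Icc (0:ℝ) 1} {α : ℕ → ℕ}
    (hx : ∀ n, x ∈ VK (rp n α)) : x = fA α := by
  -- Step 1: x is in every DcK (rp n α)
  have hD : ∀ n, x ∈ DcK (rp n α) := by
    intro n
    simp only [DcK]
    rw [Metric.mem_closure_iff]
    intro ε hε
    obtain ⟨m, hm⟩ := exists_pow_lt_of_lt_one (half_pos hε) (by norm_num : (1/2:ℝ) < 1)
    set m' := max m n with hm'
    have hm'2 : ((1/2:ℝ))^m' ≤ (1/2)^m :=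
      pow_le_pow_of_le_one (by norm_num) (by norm_num) (le_max_left m n)
    have hx' := hx m'
    simp only [VK, mem_iUnion, Metric.mem_ball] at hx'
    obtain ⟨d, hd, hdist⟩ := hx'
    rw [rp_length] at hdist
    -- d is in the closure of fA '' cylin (rp m' α); pick b within ε/2
    rw [DcK, Metric.mem_closure_iff] at hd
    obtain ⟨b, hb, hbd⟩ := hd (ε/2) (half_pos hε)
    refine ⟨b, ?_, ?_⟩
    · -- b ∈ fA '' cylin (rp m' α) ⊆ fA '' cylin (rp n α)
      exact image_mono (f := fA) (cylin_antitone (rp_suffix (le_max_right m n) α)) hb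
    · have : dist x b ≤ dist x d + dist d b := dist_triangle x d b
      have h1 : dist x d < ε/2 := lt_of_lt_of_le hdist (hm'2.trans hm.le)
      linarith
  -- Step 2: extract approximating sequence
  have key : ∀ n : ℕ, ∃ β ∈ cylin (rp n α), dist x (fA β) < (1/2)^n := by
    intro n
    have := hD n
    rw [DcK, Metric.mem_closure_iff] at this
    obtain ⟨b, hb, hbd⟩ := this ((1/2)^n) (by positivity)
    obtain ⟨β, hβ, rfl⟩ := hb
    exact ⟨β, hβ, hbd⟩
  choose β hβ hβd using key
  have h1 : Filter.Tendsto β Filter.atTop (nhds α) := by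
    rw [tendsto_pi_nhds]
    intro i
    refine Filter.Tendsto.congr' ?_ tendsto_const_nhds
    filter_upwards [Filter.eventually_ge_atTop (i+1)] with n hn
    have := hβ n
    simp only [cylin, mem_setOf_eq, rp_length] at this
    exact ((rp_eq_iff.1 this) i (by omega)).symm
  have h2 : Filter.Tendsto (fun n => fA (β n)) Filter.atTop (nhds (fA α)) :=
    (fA_cont.tendsto α).comp h1
  have h3 : Filter.Tendsto (fun n => fA (β n)) Filter.atTop (nhds x) := by
    rw [Metric.tendsto_atTop]
    intro ε hε
    obtain ⟨N, hN⟩ := exists_pow_lt_of_lt_one hε (by norm_num : (1/2:ℝ) < 1)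
    refine ⟨N, fun n hn => ?_⟩
    rw [dist_comm]
    calc dist x (fA (β n)) < (1/2)^n := hβd n
      _ ≤ (1/2)^N := pow_le_pow_of_le_one (by norm_num) (by norm_num) hn
      _ < ε := hN
  exact tendsto_nhds_unique h3 h2

/-! ### the limit points of branches -/

def yyK (α : ℕ → ℕ) : ℝ := ⨆ n, baseK (rp n α)

lemma baseK_child_le (i : ℕ) (s : List ℕ) : baseK s ≤ baseK (i :: s) := by
  have h1 := lenK_pos s
  have h2 := tI_ge i
  have : baseK (i :: s) = baseK s + lenK s * tI i := rfl
  nlinarith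

lemma baseK_suffix_le {s t : List ℕ} (h : s <:+ t) : baseK s ≤ baseK t := by
  obtain ⟨u, rfl⟩ := h
  induction u with
  | nil => simp
  | cons i u ih => exact ih.trans (baseK_child_le i (u ++ s))

lemma baseK_mem_KK (s : List ℕ) : baseK s ∈ KK s := by
  have := lenK_pos s
  simp only [KK, mem_Icc]
  constructor <;> nlinarith

lemma bddAbove_baseK (α : ℕ → ℕ) : BddAbove (range fun n => baseK (rp n α)) := by
  refine ⟨1, ?_⟩
  rintro y ⟨n, rfl⟩
  exact ((KK_subset_unit _) (baseK_mem_KK (rp n α))).2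

lemma yyK_mem_KK (α : ℕ → ℕ) (n : ℕ) : yyK α ∈ KK (rp n α) := by
  constructor
  · exact le_ciSup_of_le (bddAbove_baseK α) n le_rfl
  · apply ciSup_le
    intro m
    rcases le_total m n with h | h
    · have := baseK_suffix_le (rp_suffix h α)
      have h2 := (baseK_mem_KK (rp n α)).2
      linarith [lenK_pos (rp n α)]
    · have hsuf := rp_suffix h α
      have := (KK_suffix_subset hsuf) (baseK_mem_KK (rp m α))
      simp only [KK, mem_Icc] at this
      exact this.2

lemma yyK_mem_unit (α : ℕ → ℕ) : yyK α ∈ Icc (0:ℝ) 1 := by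
  have := (KK_subset_unit _) (yyK_mem_KK α 0)
  exact ⟨by linarith [this.1], this.2⟩

/-! ### Part E : the multivalued function -/

def Ratl (r : ℝ) : Prop := ∃ q : ℚ, (q : ℝ) = r

def FF : Set.Icc (0:ℝ) 1 → Set (Set.Icc (0:ℝ) 1) := fun x => {y |
  (Ratl ↑x ∧ (y:ℝ) = 0) ∨
  (¬Ratl ↑x ∧ (y:ℝ) = 1/4) ∨
  (∃ s : List ℕ, x ∈ VK s ∧ Ratl ↑x ∧ (y:ℝ) = topK s) ∨
  (∃ s : List ℕ, x ∈ VK s ∧ ¬Ratl ↑x ∧ (y:ℝ) = botK s) ∨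
  (∀ n : ℕ, ∃ s : List ℕ, s.length = n ∧ x ∈ VK s ∧ (y:ℝ) ∈ KK s)}

lemma nonempty_FF (x : Set.Icc (0:ℝ) 1) : (FF x).Nonempty := by
  by_cases h : Ratl ↑x
  · exact ⟨⟨0, by norm_num⟩, Or.inl ⟨h, rfl⟩⟩
  · exact ⟨⟨1/4, by norm_num⟩, Or.inr (Or.inl ⟨h, rfl⟩)⟩

lemma dist_II (x y : Set.Icc (0:ℝ) 1) : dist x y = |(x:ℝ) - (y:ℝ)| := by
  rw [Subtype.dist_eq, Real.dist_eq]

lemma KK_unit {s : List ℕ} {y : ℝ} (h : y ∈ KK s) : y ∈ Set.Icc (0:ℝ) 1 := by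
  have := KK_subset_unit s h
  exact ⟨by linarith [this.1], this.2⟩

lemma KK_half {s : List ℕ} {y : ℝ} (h : y ∈ KK s) : 1/2 ≤ y :=
  (KK_subset_unit s h).1

lemma diam_KK {s : List ℕ} {a b : ℝ} (ha : a ∈ KK s) (hb : b ∈ KK s) :
    |a - b| ≤ lenK s := by
  simp only [KK, mem_Icc] at ha hb
  rw [abs_sub_le_iff]
  constructor <;> linarith [ha.1, ha.2, hb.1, hb.2]

lemma near_rat (x : Set.Icc (0:ℝ) 1) {δ : ℝ} (hδ : 0 < δ) :
    ∃ x' : Set.Icc (0:ℝ) 1, dist x' x < δ ∧ Ratl ↑x' := by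
  obtain ⟨ha0, ha1⟩ := x.2
  by_cases h : (x:ℝ) < 1
  · obtain ⟨q, hq1, hq2⟩ := exists_rat_btwn (lt_min (by linarith : (x:ℝ) < ↑x + δ) h)
    rw [lt_min_iff] at hq2
    refine ⟨⟨(q:ℝ), ⟨by linarith [hq1], le_of_lt hq2.2⟩⟩, ?_, ⟨q, rfl⟩⟩
    rw [dist_II]
    simp only
    rw [abs_of_pos (by linarith [hq1])]
    linarith [hq2.1]
  · have hx1 : (x:ℝ) = 1 := le_antisymm ha1 (not_lt.1 h)
    have hlt : max (1-δ) 0 < 1 := max_lt (by linarith) one_pos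
    obtain ⟨q, hq1, hq2⟩ := exists_rat_btwn hlt
    rw [max_lt_iff] at hq1
    refine ⟨⟨(q:ℝ), ⟨le_of_lt hq1.2, le_of_lt hq2⟩⟩, ?_, ⟨q, rfl⟩⟩
    rw [dist_II, hx1]
    simp only
    rw [abs_of_nonpos (by linarith)]
    linarith [hq1.1]

lemma near_irr (x : Set.Icc (0:ℝ) 1) {δ : ℝ} (hδ : 0 < δ) :
    ∃ x' : Set.Icc (0:ℝ) 1, dist x' x < δ ∧ ¬ Ratl ↑x' := by
  obtain ⟨ha0, ha1⟩ := x.2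
  by_cases h : (x:ℝ) < 1
  · obtain ⟨r, hirr, hq1, hq2⟩ := exists_irrational_btwn (lt_min (by linarith : (x:ℝ) < ↑x + δ) h)
    rw [lt_min_iff] at hq2
    refine ⟨⟨r, ⟨by linarith [hq1], le_of_lt hq2.2⟩⟩, ?_, ?_⟩
    · rw [dist_II]
      simp only
      rw [abs_of_pos (by linarith [hq1])]
      linarith [hq2.1]
    · rintro ⟨q, hq⟩
      exact hirr ⟨q, hq⟩
  · have hx1 : (x:ℝ) = 1 := le_antisymm ha1 (not_lt.1 h)
    have hlt : max (1-δ) 0 < 1 := max_lt (by linarith) one_pos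
    obtain ⟨r, hirr, hq1, hq2⟩ := exists_irrational_btwn hlt
    rw [max_lt_iff] at hq1
    refine ⟨⟨r, ⟨le_of_lt hq1.2, le_of_lt hq2⟩⟩, ?_, ?_⟩
    · rw [dist_II, hx1]
      simp only
      rw [abs_of_nonpos (by linarith)]
      linarith [hq1.1]
    · rintro ⟨q, hq⟩
      exact hirr ⟨q, hq⟩

lemma cont_AA2 (α : ℕ → ℕ) : MVContinuousAt FF (fA α) := by
  refine ⟨⟨yyK α, yyK_mem_unit α⟩, ?_, ?_⟩
  · refine Or.inr (Or.inr (Or.inr (Or.inr fun n => ?_)))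
    exact ⟨rp n α, rp_length n α, mem_VK_self α n, yyK_mem_KK α n⟩
  · intro ε hε
    obtain ⟨n, hn⟩ := exists_pow_lt_of_lt_one hε (by norm_num : (1/2:ℝ) < 1)
    have hlen : lenK (rp n α) < ε := by
      calc lenK (rp n α) ≤ (1/2)^((rp n α).length + 1) := lenK_le_pow _
        _ ≤ (1/2)^n := by
            rw [rp_length]
            apply pow_le_pow_of_le_one (by norm_num) (by norm_num) (by omega)
        _ < ε := hn
    have hopen := isOpen_VK (rp n α)
    rw [Metric.isOpen_iff] at hopen
    obtain ⟨δ, hδpos, hball⟩ := hopen (fA α) (mem_VK_self α n)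
    refine ⟨δ, hδpos, fun x' hx' => ?_⟩
    have hx'V : x' ∈ VK (rp n α) := hball (by rwa [Metric.mem_ball])
    by_cases hrat : Ratl ↑x'
    · refine ⟨⟨topK (rp n α), KK_unit (topK_mem _)⟩, ?_, ?_⟩
      · exact Or.inr (Or.inr (Or.inl ⟨rp n α, hx'V, hrat, rfl⟩))
      · rw [dist_II]
        simp only
        exact lt_of_le_of_lt (diam_KK (yyK_mem_KK α n) (topK_mem _)) hlen
    · refine ⟨⟨botK (rp n α), KK_unit (botK_mem _)⟩, ?_, ?_⟩
      · exact Or.inr (Or.inr (Or.inr (Or.inl ⟨rp n α, hx'V, hrat, rfl⟩)))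
      · rw [dist_II]
        simp only
        exact lt_of_le_of_lt (diam_KK (yyK_mem_KK α n) (botK_mem _)) hlen

lemma discont_AA2 {x : Set.Icc (0:ℝ) 1} (hx : x ∉ AA2) : ¬ MVContinuousAt FF x := by
  rintro ⟨y, hyF, hy⟩
  have hhalf : ∀ t : List ℕ, (1:ℝ)/2 ≤ topK t := fun t => KK_half (topK_mem t)
  have hhalfb : ∀ t : List ℕ, (1:ℝ)/2 ≤ botK t := fun t => KK_half (botK_mem t)
  rcases hyF with ⟨hrx, hy0⟩ | ⟨hix, hy14⟩ | ⟨s, hxV, hrx, hyt⟩ | ⟨s, hxV, hix, hyb⟩ | h5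
  · -- witness y = 0, x rational
    obtain ⟨δ, hδ, hδ2⟩ := hy (1/8) (by norm_num)
    obtain ⟨x', hd, hirr⟩ := near_irr x hδ
    obtain ⟨y', hy'F, hdist⟩ := hδ2 x' hd
    rw [dist_II, hy0] at hdist
    rcases hy'F with ⟨hr', _⟩ | ⟨_, hv⟩ | ⟨t, _, hr', _⟩ | ⟨t, _, _, hv⟩ | h5'
    · exact hirr hr'
    · rw [hv] at hdist
      rw [show |(0:ℝ) - 1/4| = 1/4 by rw [abs_sub_comm, abs_of_nonneg] <;> norm_num] at hdist
      norm_num at hdist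
    · exact hirr hr'
    · rw [hv] at hdist
      have := hhalfb t
      rw [abs_sub_comm] at hdist
      rw [abs_of_nonneg (by linarith)] at hdist
      linarith
    · obtain ⟨t, _, _, hyK⟩ := h5' 0
      have := KK_half hyK
      rw [abs_sub_comm, abs_of_nonneg (by linarith)] at hdist
      linarith
  · -- witness y = 1/4, x irrational
    obtain ⟨δ, hδ, hδ2⟩ := hy (1/8) (by norm_num)
    obtain ⟨x', hd, hrat⟩ := near_rat x hδ
    obtain ⟨y', hy'F, hdist⟩ := hδ2 x' hd
    rw [dist_II, hy14] at hdist
    rcases hy'F with ⟨_, hv⟩ | ⟨hi', _⟩ | ⟨t, _, _, hv⟩ | ⟨t, _, hi', _⟩ | h5'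
    · rw [hv] at hdist
      rw [show |(1/4:ℝ) - 0| = 1/4 by rw [abs_of_nonneg] <;> norm_num] at hdist
      norm_num at hdist
    · exact hi' hrat
    · rw [hv] at hdist
      have := hhalf t
      rw [abs_sub_comm, abs_of_nonneg (by linarith)] at hdist
      linarith
    · exact hi' hrat
    · obtain ⟨t, _, _, hyK⟩ := h5' 0
      have := KK_half hyK
      rw [abs_sub_comm, abs_of_nonneg (by linarith)] at hdist
      linarith
  · -- witness y = topK s, x rational
    have hls := lenK_pos s
    have hls2 := lenK_le_half s
    obtain ⟨δ, hδ, hδ2⟩ := hy (lenK s / 10) (by linarith)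
    obtain ⟨x', hd, hirr⟩ := near_irr x hδ
    obtain ⟨y', hy'F, hdist⟩ := hδ2 x' hd
    rw [dist_II, hyt] at hdist
    rcases hy'F with ⟨hr', _⟩ | ⟨_, hv⟩ | ⟨t, _, hr', _⟩ | ⟨t, _, _, hv⟩ | h5'
    · exact hirr hr'
    · rw [hv] at hdist
      have := hhalf s
      rw [abs_of_nonneg (by linarith)] at hdist
      linarith
    · exact hirr hr'
    · rw [hv] at hdist
      have := far_bot_top s t
      rw [abs_sub_comm] at hdist
      linarith
    · have := (far_deep (s := s) (fun n => by
        obtain ⟨t, h1, _, h3⟩ := h5' n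
        exact ⟨t, h1, h3⟩)).1
      rw [abs_sub_comm] at hdist
      linarith
  · -- witness y = botK s, x irrational
    have hls := lenK_pos s
    have hls2 := lenK_le_half s
    obtain ⟨δ, hδ, hδ2⟩ := hy (lenK s / 10) (by linarith)
    obtain ⟨x', hd, hrat⟩ := near_rat x hδ
    obtain ⟨y', hy'F, hdist⟩ := hδ2 x' hd
    rw [dist_II, hyb] at hdist
    rcases hy'F with ⟨_, hv⟩ | ⟨hi', _⟩ | ⟨t, _, _, hv⟩ | ⟨t, _, hi', _⟩ | h5'
    · rw [hv] at hdist
      have := hhalfb s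
      rw [abs_of_nonneg (by linarith)] at hdist
      linarith
    · exact hi' hrat
    · rw [hv] at hdist
      have := far_top_bot' s t
      rw [abs_sub_comm] at hdist
      linarith
    · exact hi' hrat
    · have := (far_deep (s := s) (fun n => by
        obtain ⟨t, h1, _, h3⟩ := h5' n
        exact ⟨t, h1, h3⟩)).2
      rw [abs_sub_comm] at hdist
      linarith
  · -- the branch witness forces x ∈ AA2
    apply hx
    choose sf hsflen hsfV hsfK using h5
    set α : ℕ → ℕ := fun i => (sf (i+1)).headI with hα
    have hchain : ∀ n, sf (n+1) = α n :: sf n := by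
      intro n
      have hsuf : sf n <:+ sf (n+1) := by
        apply KK_suffix_of_inter (by rw [hsflen, hsflen]; omega)
        exact ⟨(y:ℝ), hsfK n, hsfK (n+1)⟩
      obtain ⟨u, hu⟩ := hsuf
      have hul : u.length = 1 := by
        have := congrArg List.length hu
        simp only [List.length_append, hsflen] at this
        omega
      obtain ⟨i, rfl⟩ := List.length_eq_one_iff.1 hul
      rw [← hu]
      simp [hα, ← hu]
    have hrp : ∀ n, rp n α = sf n := by
      intro n
      induction n with
      | zero =>
        have : sf 0 = [] := List.length_eq_zero_iff.1 (hsflen 0)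
        rw [this]; rfl
      | succ n ih =>
        have : rp (n+1) α = α n :: rp n α := rfl
        rw [this, ih, ← hchain n]
    have : x = fA α := VK_limit (fun n => by rw [hrp n]; exact hsfV n)
    exact ⟨α, this.symm⟩

lemma contset_eq : {x : Set.Icc (0:ℝ) 1 | MVContinuousAt FF x} = AA2 := by
  ext x
  simp only [mem_setOf_eq]
  constructor
  · intro h
    by_contra hx
    exact discont_AA2 hx h
  · rintro ⟨α, rfl⟩
    exact cont_AA2 α

lemma measurable_Ratl : MeasurableSet {x : Set.Icc (0:ℝ) 1 | Ratl ↑x} := by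
  have : {x : Set.Icc (0:ℝ) 1 | Ratl ↑x}
      = Subtype.val ⁻¹' (Set.range ((↑) : ℚ → ℝ)) := by
    ext x
    simp [Ratl, eq_comm]
  rw [this]
  exact (Set.countable_range _).measurableSet.preimage measurable_subtype_coe

lemma graph_meas : MeasurableSet {p : (Set.Icc (0:ℝ) 1) × (Set.Icc (0:ℝ) 1) | p.2 ∈ FF p.1} := by
  have hset : {p : (Set.Icc (0:ℝ) 1) × (Set.Icc (0:ℝ) 1) | p.2 ∈ FF p.1}
      = ({p | Ratl ↑p.1 ∧ ((p.2:ℝ)) = 0}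
      ∪ {p | ¬Ratl ↑p.1 ∧ ((p.2:ℝ)) = 1/4}
      ∪ (⋃ s : List ℕ, {p | p.1 ∈ VK s ∧ Ratl ↑p.1 ∧ ((p.2:ℝ)) = topK s})
      ∪ (⋃ s : List ℕ, {p | p.1 ∈ VK s ∧ ¬Ratl ↑p.1 ∧ ((p.2:ℝ)) = botK s})
      ∪ (⋂ n : ℕ, ⋃ s : List ℕ, ⋃ (_ : s.length = n),
          {p | p.1 ∈ VK s ∧ ((p.2:ℝ)) ∈ KK s})) := by
    ext p
    simp only [FF, mem_setOf_eq, mem_union, mem_iUnion, mem_iInter, exists_prop, and_assoc]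
    constructor
    · rintro (h | h | h | h | h)
      · exact Or.inl (Or.inl (Or.inl (Or.inl h)))
      · exact Or.inl (Or.inl (Or.inl (Or.inr h)))
      · exact Or.inl (Or.inl (Or.inr h))
      · exact Or.inl (Or.inr h)
      · exact Or.inr h
    · rintro ((((h | h) | h) | h) | h)
      · exact Or.inl h
      · exact Or.inr (Or.inl h)
      · exact Or.inr (Or.inr (Or.inl h))
      · exact Or.inr (Or.inr (Or.inr (Or.inl h)))
      · exact Or.inr (Or.inr (Or.inr (Or.inr h)))
  rw [hset]
  have hfst : Measurable fun p : (Set.Icc (0:ℝ) 1) × (Set.Icc (0:ℝ) 1) => p.1 := measurable_fst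
  have hsndv : Measurable fun p : (Set.Icc (0:ℝ) 1) × (Set.Icc (0:ℝ) 1) => (p.2 : ℝ) :=
    measurable_subtype_coe.comp measurable_snd
  refine MeasurableSet.union (MeasurableSet.union (MeasurableSet.union (MeasurableSet.union
    ?_ ?_) ?_) ?_) ?_
  · exact (measurable_Ratl.preimage hfst).inter (hsndv (measurableSet_singleton 0))
  · exact (measurable_Ratl.preimage hfst).compl.inter (hsndv (measurableSet_singleton (1/4)))
  · exact MeasurableSet.iUnion fun s =>
      ((isOpen_VK s).measurableSet.preimage hfst).inter
        ((measurable_Ratl.preimage hfst).inter (hsndv (measurableSet_singleton (topK s))))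
  · exact MeasurableSet.iUnion fun s =>
      ((isOpen_VK s).measurableSet.preimage hfst).inter
        ((measurable_Ratl.preimage hfst).compl.inter (hsndv (measurableSet_singleton (botK s))))
  · refine MeasurableSet.iInter fun n => MeasurableSet.iUnion fun s => MeasurableSet.iUnion fun _ => ?_
    exact ((isOpen_VK s).measurableSet.preimage hfst).inter (hsndv measurableSet_Icc)

end MVAux

theorem exists_multivalued_function_unitInterval_continuity_set_analytic_not_Borel :
    ∃ F : Set.Icc (0 : ℝ) 1 → Set (Set.Icc (0 : ℝ) 1),
      (∀ x, (F x).Nonempty) ∧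
      @MeasurableSet _ (borel (Set.Icc (0 : ℝ) 1 × Set.Icc (0 : ℝ) 1))
        {p : Set.Icc (0 : ℝ) 1 × Set.Icc (0 : ℝ) 1 | p.2 ∈ F p.1} ∧
      MeasureTheory.AnalyticSet {x : Set.Icc (0 : ℝ) 1 | MVContinuousAt F x} ∧
      ¬ @MeasurableSet _ (borel (Set.Icc (0 : ℝ) 1))
        {x : Set.Icc (0 : ℝ) 1 | MVContinuousAt F x} := by
  refine ⟨FF, nonempty_FF, ?_, ?_, ?_⟩
  · rw [← BorelSpace.measurable_eq (α := Set.Icc (0:ℝ) 1 × Set.Icc (0:ℝ) 1)]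
    exact graph_meas
  · rw [contset_eq]
    exact analyticSet_AA2
  · rw [contset_eq, ← BorelSpace.measurable_eq (α := Set.Icc (0:ℝ) 1)]
    exact not_measurableSet_AA2
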